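/- Let X be a real Banach space and Y ⊆ X a closed subspace. For every extreme point y* of the closed unit ball of Y*, there exists an extreme point x* of the closed unit ball of X* such that x* restricted to Y equals y*. -/

import Mathlib

open NormedSpace

/-- Every extreme point of the closed unit ball of `Y*` extends to an extreme point of the
closed unit ball of `X*`. -/
theorem stmt_1 (X : Type*) [NormedAddCommGroup X] [NormedSpace ℝ X] [CompleteSpace X]
    (Y : Submodule ℝ X) (hYclosed : IsClosed (Y : Set X))
    (y' : StrongDual ℝ Y)
    (hy : y' ∈ Set.extremePoints ℝ (Metric.closedBall (0 : StrongDual ℝ Y) 1)) :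
    ∃ x' : StrongDual ℝ X,
      x' ∈ Set.extremePoints ℝ (Metric.closedBall (0 : StrongDual ℝ X) 1) ∧
      ∀ y : Y, x' (y : X) = y' y := by
  have hy1 : ‖y'‖ ≤ 1 := (dist_zero_right y').symm.trans_le (Metric.mem_closedBall.mp hy.1)
  -- The set of norm-preserving extensions, in the weak* topology.
  set F : Set (WeakDual ℝ X) :=
    {x' | ‖WeakDual.toStrongDual x'‖ ≤ 1 ∧ ∀ y : Y, x' (y : X) = y' y} with hF
  -- F is compact
  have hFeq : F = (WeakDual.toStrongDual ⁻¹' Metric.closedBall 0 1) ∩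
      ⋂ y : Y, {x' : WeakDual ℝ X | x' (y : X) = y' y} := by
    ext x'
    simp [hF, mem_closedBall_zero_iff]
  have hclosed : IsClosed F := by
    rw [hFeq]
    refine IsClosed.inter (WeakDual.isClosed_closedBall 0 1) ?_
    exact isClosed_iInter fun y =>
      isClosed_eq (WeakDual.eval_continuous (y : X)) continuous_const
  have hFcomp : IsCompact F := by
    rw [hFeq]
    exact (WeakDual.isCompact_closedBall (𝕜 := ℝ) (E := X) 0 1).inter_right
      (isClosed_iInter fun y =>
        isClosed_eq (WeakDual.eval_continuous (y : X)) continuous_const)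
  -- F is nonempty (Hahn-Banach)
  obtain ⟨g, hg, hgnorm⟩ := exists_extension_norm_eq Y y'
  have hFne : F.Nonempty := ⟨StrongDual.toWeakDual g, by
    constructor
    · show ‖g‖ ≤ 1
      rw [hgnorm]; exact hy1
    · exact hg⟩
  haveI : LocallyConvexSpace ℝ (WeakDual ℝ X) :=
    WeakBilin.locallyConvexSpace (B := topDualPairing ℝ X)
  -- Krein-Milman lemma
  obtain ⟨e, he⟩ := hFcomp.extremePoints_nonempty hFne
  obtain ⟨⟨heball, hext⟩, hemin⟩ := mem_extremePoints.mp he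
  refine ⟨WeakDual.toStrongDual e, ?_, hext⟩
  rw [mem_extremePoints]
  refine ⟨by rwa [mem_closedBall_zero_iff], fun a ha b hb hab => ?_⟩
  rw [mem_closedBall_zero_iff] at ha hb
  obtain ⟨u, v, hu, hv, huv, hsum⟩ := hab
  -- restrictions of a and b to Y
  have hra : ‖a.comp Y.subtypeL‖ ≤ 1 := by
    refine ContinuousLinearMap.opNorm_le_bound _ zero_le_one fun y => ?_
    simpa using ((a.le_opNorm (y : X)).trans (by
      have : ‖(y : X)‖ = ‖y‖ := rfl
      rw [this]
      exact mul_le_of_le_one_left (norm_nonneg _) ha))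
  have hrb : ‖b.comp Y.subtypeL‖ ≤ 1 := by
    refine ContinuousLinearMap.opNorm_le_bound _ zero_le_one fun y => ?_
    simpa using ((b.le_opNorm (y : X)).trans (by
      have : ‖(y : X)‖ = ‖y‖ := rfl
      rw [this]
      exact mul_le_of_le_one_left (norm_nonneg _) hb))
  have hyseg : y' ∈ openSegment ℝ (a.comp Y.subtypeL) (b.comp Y.subtypeL) := by
    refine ⟨u, v, hu, hv, huv, ?_⟩
    ext y
    have := congrArg (fun f : StrongDual ℝ X => f (y : X)) hsum
    simpa [hext y] using this
  have hres := (mem_extremePoints.mp hy).2 _ (Metric.mem_closedBall.mpr ((dist_zero_right (a.comp Y.subtypeL)).trans_le hra)) _ (Metric.mem_closedBall.mpr ((dist_zero_right (b.comp Y.subtypeL)).trans_le hrb)) hyseg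
  have haF : StrongDual.toWeakDual a ∈ F := by
    refine ⟨ha, fun y => ?_⟩
    have := congrArg (fun f : StrongDual ℝ Y => f y) hres.1
    simpa using this
  have hbF : StrongDual.toWeakDual b ∈ F := by
    refine ⟨hb, fun y => ?_⟩
    have := congrArg (fun f : StrongDual ℝ Y => f y) hres.2
    simpa using this
  have heseg : e ∈ openSegment ℝ (StrongDual.toWeakDual a) (StrongDual.toWeakDual b) := by
    refine ⟨u, v, hu, hv, huv, ?_⟩
    have : StrongDual.toWeakDual (u • a + v • b) = e := by
      rw [hsum]; rfl
    simpa [map_add, map_smul] using this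
  obtain ⟨h1, h2⟩ := hemin _ haF _ hbF heseg
  constructor
  · exact congrArg WeakDual.toStrongDual h1
  · exact congrArg WeakDual.toStrongDual h2
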